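/- Suppose 𝔰 > ℵ₁, i.e. there is no splitting family of size at most ℵ₁. Then the strong polarized partition relation (ω₁, ω) → (ω₁, ω)^{1,1}_2 holds: for every c : ω₁ × ω → 2 there are A ⊆ ω₁ with |A| = ℵ₁ and an infinite B ⊆ ω such that c is constant on A × B. -/

import Mathlib

/-- `x` splits `b` iff both `x ∩ b` and `b \ x` are infinite. -/
def Splits (x b : Set ℕ) : Prop := (x ∩ b).Infinite ∧ (b \ x).Infinite

/-- `S` is a club (closed unbounded) subset of the ordinal `o`. -/
def IsClubIn (o : Ordinal) (S : Set Ordinal) : Prop :=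
  S ⊆ Set.Iio o ∧
  (∀ α < o, ∃ β ∈ S, α ≤ β) ∧
  (∀ α < o, α ≠ 0 → (∀ β < α, ∃ γ ∈ S, β < γ ∧ γ < α) → α ∈ S)

/-- A tail-splitting sequence of length `κ`. -/
def TailSplittingSeq (κ : Cardinal) (a : Ordinal → Set ℕ) : Prop :=
  (∀ α < κ.ord, (a α).Infinite) ∧
  ∀ b : Set ℕ, b.Infinite →
    ∃ α < κ.ord, ∀ β : Ordinal, α ≤ β → β < κ.ord → Splits (a β) b

/-- A club-splitting sequence of length `κ`. -/
def ClubSplittingSeq (κ : Cardinal) (a : Ordinal → Set ℕ) : Prop :=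
  (∀ α < κ.ord, (a α).Infinite) ∧
  ∀ b : Set ℕ, b.Infinite →
    ∃ S : Set Ordinal, IsClubIn κ.ord S ∧ ∀ α ∈ S, Splits (a α) b

/-- The strong polarized partition relation `(λ, ω) → (λ, ω)^{1,1}_2`. -/
def StrongPolarized (lam : Cardinal.{0}) : Prop :=
  ∀ c : Ordinal.{0} → ℕ → Fin 2,
    ∃ (A : Set Ordinal.{0}) (B : Set ℕ) (i : Fin 2),
      A ⊆ Set.Iio lam.ord ∧ Cardinal.mk A = Cardinal.lift.{1} lam ∧ B.Infinite ∧
      ∀ α ∈ A, ∀ n ∈ B, c α n = i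

/-- If there is no splitting family of size at most `ℵ₁` (i.e. `𝔰 > ℵ₁`), then
`(ω₁, ω) → (ω₁, ω)^{1,1}_2` holds. -/
theorem s_gt_aleph1_polarized
    (h : ∀ F : Set (Set ℕ), Cardinal.mk F ≤ Cardinal.aleph 1 →
      ¬ ∀ b : Set ℕ, b.Infinite → ∃ x ∈ F, Splits x b) :
    StrongPolarized (Cardinal.aleph 1) := by
  intro c
  classical
  set o := ((Cardinal.aleph 1 : Cardinal.{0})).ord with ho
  have hmkIio : Cardinal.mk (Set.Iio o) = Cardinal.lift.{1} ((Cardinal.aleph 1 : Cardinal.{0})) := by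
    rw [ho, Ordinal.mk_Iio_ordinal, Cardinal.card_ord]
  set F : Set (Set ℕ) := {x | ∃ α, α < o ∧ x = {n | c α n = 1}} with hFdef
  have hFcard : Cardinal.mk F ≤ (Cardinal.aleph 1 : Cardinal.{0}) := by
    have emb : F ↪ Set.Iio o :=
      ⟨fun x => ⟨x.2.choose, x.2.choose_spec.1⟩, by
        rintro ⟨x, hx⟩ ⟨y, hy⟩ hxy
        simp only [Subtype.mk.injEq] at hxy ⊢
        rw [hx.choose_spec.2, hy.choose_spec.2, Subtype.mk.inj hxy]⟩
    have := Cardinal.lift_mk_le'.mpr ⟨emb⟩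
    rw [hmkIio] at this
    simpa using this
  have := h F hFcard
  push_neg at this
  obtain ⟨b, hb, hbs⟩ := this
  have key : ∀ α : Set.Iio o, ∃ (i : Fin 2) (E : Finset ℕ),
      ∀ n ∈ b, n ∉ (E : Set ℕ) → c α n = i := by
    rintro ⟨α, hα⟩
    have hx : {n | c α n = 1} ∈ F := ⟨α, hα, rfl⟩
    have hns := hbs _ hx
    rw [Splits, not_and_or] at hns
    rcases hns with h1 | h0
    · rw [Set.not_infinite] at h1
      refine ⟨0, h1.toFinset, fun n hn hnE => ?_⟩
      have hnx : n ∉ {n | c α n = 1} := fun hx' => hnE (by simp [h1, hx', hn])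
      have : c α n = 0 ∨ c α n = 1 := by
        rcases (c α n) with ⟨v, hv⟩; interval_cases v <;> simp
      rcases this with h' | h'
      · exact h'
      · exact absurd h' hnx
    · rw [Set.not_infinite] at h0
      refine ⟨1, h0.toFinset, fun n hn hnE => ?_⟩
      have : n ∈ {n | c α n = 1} := by
        by_contra hx'
        exact hnE (by simp [h0, hn, hx'])
      exact this
  choose i E hE using key
  set f : Set.Iio o → Fin 2 × Finset ℕ := fun α => (i α, E α) with hfdef
  have pig : ∃ p, Cardinal.lift.{1} ((Cardinal.aleph 1 : Cardinal.{0})) ≤ Cardinal.mk (f ⁻¹' {p}) := by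
    by_contra hc
    push_neg at hc
    have hcnt : ∀ p, (f ⁻¹' {p}).Countable := by
      intro p
      have := hc p
      rw [Cardinal.lift_aleph] at this
      simp only [Ordinal.lift_one] at this
      exact (Cardinal.countable_iff_lt_aleph_one _).mpr this
    have huniv : (Set.univ : Set (Set.Iio o)).Countable := by
      have hu : (⋃ p, f ⁻¹' {p}) = Set.univ := by ext x; simp
      rw [← hu]
      exact Set.countable_iUnion hcnt
    have hle : Cardinal.mk (Set.Iio o) ≤ Cardinal.aleph0 := by
      rw [← Cardinal.mk_univ]
      exact Cardinal.mk_le_aleph0_iff.mpr huniv.to_subtype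
    rw [hmkIio, Cardinal.lift_aleph] at hle
    simp only [Ordinal.lift_one] at hle
    exact absurd hle (not_le_of_gt Cardinal.aleph0_lt_aleph_one)
  obtain ⟨p, hp⟩ := pig
  refine ⟨Subtype.val '' (f ⁻¹' {p}), b \ ↑p.2, p.1, ?_, ?_, hb.diff p.2.finite_toSet, ?_⟩
  · rintro _ ⟨⟨α, hα⟩, -, rfl⟩; exact hα
  · refine le_antisymm ?_ ?_
    · calc Cardinal.mk (Subtype.val '' (f ⁻¹' {p}) : Set Ordinal)
          ≤ Cardinal.mk (Set.Iio o) :=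
            Cardinal.mk_le_mk_of_subset (by rintro _ ⟨⟨α, hα⟩, -, rfl⟩; exact hα)
        _ = _ := hmkIio
    · rw [Cardinal.mk_image_eq Subtype.val_injective]; exact hp
  · rintro _ ⟨⟨α, hα⟩, hmem, rfl⟩ n hn
    simp only [Set.mem_preimage, Set.mem_singleton_iff, hfdef] at hmem
    have hi : i ⟨α, hα⟩ = p.1 := by rw [← hmem]
    have hEe : E ⟨α, hα⟩ = p.2 := by rw [← hmem]
    have := hE ⟨α, hα⟩ n hn.1 (by rw [hEe]; exact hn.2)
    rw [hi] at this
    exact this
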